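/- arXiv:2602.02153 — 2 statements merged into one kernel-verified Lean document; each statement's English description precedes it below -/
import Mathlib

section
/- Mehler orthogonality for correlated Gaussians: let Z₁, Z₂ be independent standard Gaussian random variables, let ρ ∈ [−1, 1], and set X = Z₁ and Y = ρZ₁ + √(1−ρ²) Z₂ (so X, Y are jointly Gaussian, each standard, with correlation ρ). Then for all natural numbers m, n: E[He_m(X) · He_n(Y)] = n! · ρ^n if m = n, and E[He_m(X) · He_n(Y)] = 0 if m ≠ n. -/
open MeasureTheory ProbabilityTheory Matrix Nat
open scoped NNReal

/-- The `n`-th probabilists' Hermite polynomial, as a function `ℝ → ℝ`. -/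
noncomputable def He (n : ℕ) (x : ℝ) : ℝ := Polynomial.aeval x (Polynomial.hermite n)

open Polynomial in
lemma derivative_hermite_int (n : ℕ) :
    derivative (hermite (n + 1)) = (n + 1) • hermite n := by
  induction n with
  | zero => simp [hermite_one, hermite_zero]
  | succ n ih =>
    rw [hermite_succ (n+1), derivative_sub, derivative_mul, derivative_X, one_mul, ih,
      derivative_smul, hermite_succ n, mul_smul_comm]
    module

noncomputable def HR (n : ℕ) : Polynomial ℝ := (Polynomial.hermite n).map (Int.castRingHom ℝ)

lemma He_eq (n : ℕ) (x : ℝ) : He n x = (HR n).eval x := by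
  rw [He, HR, Polynomial.eval_map, Polynomial.aeval_def]
  rfl

lemma HR_zero : HR 0 = 1 := by simp [HR, Polynomial.hermite_zero]

open Polynomial in
lemma derivative_HR (n : ℕ) : derivative (HR n) = n • HR (n - 1) := by
  cases n with
  | zero => simp [HR_zero]
  | succ n =>
    rw [HR, Polynomial.derivative_map, derivative_hermite_int, ← Polynomial.coe_mapRingHom, map_nsmul]
    simp [HR]

open Polynomial in
lemma HR_succ (n : ℕ) : HR (n + 1) = X * HR n - n • HR (n - 1) := by
  rw [← derivative_HR n]
  simp only [HR, Polynomial.hermite_succ, Polynomial.map_sub, Polynomial.map_mul,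
    Polynomial.map_X, Polynomial.derivative_map]

open MeasureTheory ProbabilityTheory Polynomial Filter Real

noncomputable def φr (x : ℝ) : ℝ := (Real.sqrt (2 * Real.pi))⁻¹ * Real.exp (-(x ^ 2 / 2))

lemma φr_nonneg (x : ℝ) : 0 ≤ φr x := by unfold φr; positivity

lemma φr_cont : Continuous φr := by unfold φr; fun_prop

lemma φr_eq (x : ℝ) : gaussianPDFReal 0 1 x = φr x := by
  simp only [gaussianPDFReal, φr]
  norm_num
  left
  rw [neg_div]

lemma gauss_eq : gaussianReal 0 1 =
    (volume : Measure ℝ).withDensity (fun x => ENNReal.ofReal (φr x)) := by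
  rw [gaussianReal_of_var_ne_zero 0 one_ne_zero]
  congr 1
  ext x
  rw [gaussianPDF, φr_eq]

lemma integral_gauss (f : ℝ → ℝ) :
    ∫ x, f x ∂(gaussianReal 0 1) = ∫ x, φr x * f x := by
  rw [gauss_eq]
  have h1 : (fun x => ENNReal.ofReal (φr x)) = (fun x => (((φr x).toNNReal) : ENNReal)) := rfl
  rw [h1, integral_withDensity_eq_integral_smul (φr_cont.measurable.real_toNNReal)]
  congr 1
  funext x
  rw [NNReal.smul_def, Real.coe_toNNReal _ (φr_nonneg x), smul_eq_mul]

lemma integrable_gauss_iff (f : ℝ → ℝ) :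
    Integrable f (gaussianReal 0 1) ↔ Integrable (fun x => f x * φr x) := by
  rw [gauss_eq, integrable_withDensity_iff (φr_cont.measurable.ennreal_ofReal)
    (Filter.Eventually.of_forall fun x => ENNReal.ofReal_lt_top)]
  refine integrable_congr (Filter.Eventually.of_forall fun x => ?_)
  show f x * (ENNReal.ofReal (φr x)).toReal = f x * φr x
  rw [ENNReal.toReal_ofReal (φr_nonneg x)]

open Polynomial Filter in
lemma abs_pow_le_factorial_mul_exp (k : ℕ) (x : ℝ) : |x| ^ k ≤ k ! * Real.exp |x| := by
  have h1 : |x| ^ k / k ! ≤ Real.exp |x| := by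
    calc |x| ^ k / k ! = ∑ i ∈ Finset.range (k+1), if i = k then |x| ^ k / k ! else 0 := by simp
    _ ≤ ∑ i ∈ Finset.range (k+1), |x| ^ i / i ! := by
        apply Finset.sum_le_sum
        intro i _
        by_cases h : i = k
        · simp [h]
        · simp only [if_neg h]
          positivity
    _ ≤ Real.exp |x| := Real.sum_le_exp_of_nonneg (abs_nonneg x) (k+1)
  have hk : (0:ℝ) < k ! := by positivity
  rw [div_le_iff₀ hk] at h1
  linarith [h1]

open Polynomial in
lemma poly_bound (P : Polynomial ℝ) : ∃ C : ℝ, 0 ≤ C ∧ ∀ x : ℝ,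
    |eval x P * Real.exp (-(x ^ 2 / 2))| ≤ C * Real.exp (-(x ^ 2 / 4)) := by
  refine ⟨(∑ k ∈ Finset.range (P.natDegree + 1), |P.coeff k| * k !) * Real.exp 1, by positivity, ?_⟩
  intro x
  rw [abs_mul, abs_of_nonneg (Real.exp_pos _).le]
  have h1 : |eval x P| ≤ ∑ k ∈ Finset.range (P.natDegree + 1), |P.coeff k| * |x| ^ k := by
    rw [eval_eq_sum_range]
    refine (Finset.abs_sum_le_sum_abs _ _).trans ?_
    apply Finset.sum_le_sum
    intro i _
    rw [abs_mul, abs_pow]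
  have h2 : ∑ k ∈ Finset.range (P.natDegree + 1), |P.coeff k| * |x| ^ k
      ≤ (∑ k ∈ Finset.range (P.natDegree + 1), |P.coeff k| * k !) * Real.exp |x| := by
    rw [Finset.sum_mul]
    apply Finset.sum_le_sum
    intro i _
    rw [mul_assoc]
    exact mul_le_mul_of_nonneg_left (abs_pow_le_factorial_mul_exp i x) (abs_nonneg _)
  have h3 : Real.exp |x| * Real.exp (-(x ^ 2 / 2)) ≤ Real.exp 1 * Real.exp (-(x ^ 2 / 4)) := by
    rw [← Real.exp_add, ← Real.exp_add]
    apply Real.exp_le_exp.mpr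
    nlinarith [sq_nonneg (|x| - 2), sq_abs x]
  have hS : (0:ℝ) ≤ ∑ k ∈ Finset.range (P.natDegree + 1), |P.coeff k| * k ! := by positivity
  calc |eval x P| * Real.exp (-(x ^ 2 / 2))
      ≤ (∑ k ∈ Finset.range (P.natDegree + 1), |P.coeff k| * |x| ^ k) * Real.exp (-(x ^ 2 / 2)) :=
        mul_le_mul_of_nonneg_right h1 (Real.exp_pos _).le
    _ ≤ ((∑ k ∈ Finset.range (P.natDegree + 1), |P.coeff k| * k !) * Real.exp |x|) * Real.exp (-(x ^ 2 / 2)) :=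
        mul_le_mul_of_nonneg_right h2 (Real.exp_pos _).le
    _ = (∑ k ∈ Finset.range (P.natDegree + 1), |P.coeff k| * k !) * (Real.exp |x| * Real.exp (-(x ^ 2 / 2))) := by ring
    _ ≤ (∑ k ∈ Finset.range (P.natDegree + 1), |P.coeff k| * k !) * (Real.exp 1 * Real.exp (-(x ^ 2 / 4))) :=
        mul_le_mul_of_nonneg_left h3 hS
    _ = _ := by ring

open Polynomial in
lemma integrable_poly_exp (P : Polynomial ℝ) :
    Integrable (fun x => eval x P * Real.exp (-(x ^ 2 / 2))) (volume : Measure ℝ) := by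
  obtain ⟨C, hC0, hC⟩ := poly_bound P
  have hint : Integrable (fun x : ℝ => C * Real.exp (-(x ^ 2 / 4))) (volume : Measure ℝ) := by
    have h := (integrable_exp_neg_mul_sq (show (0:ℝ) < 4⁻¹ by norm_num)).const_mul C
    have e : (fun x : ℝ => C * Real.exp (-(x ^ 2 / 4))) = fun x : ℝ => C * Real.exp (-4⁻¹ * x ^ 2) := by
      funext x; congr 1; ring_nf
    rw [e]; exact h
  refine hint.mono' (Continuous.aestronglyMeasurable (by fun_prop)) ?_
  exact Filter.Eventually.of_forall fun x => by simpa [Real.norm_eq_abs, abs_mul, abs_of_nonneg (Real.exp_pos _).le] using hC x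

open Polynomial Filter in
lemma tendsto_poly_exp_atTop (P : Polynomial ℝ) :
    Tendsto (fun x => eval x P * Real.exp (-(x ^ 2 / 2))) atTop (nhds 0) := by
  obtain ⟨C, hC0, hC⟩ := poly_bound P
  have hb : ∀ x : ℝ, |eval x P * Real.exp (-(x ^ 2 / 2))| ≤ (C * Real.exp 1) * Real.exp (-|x|) := by
    intro x
    refine (hC x).trans ?_
    rw [mul_assoc]
    apply mul_le_mul_of_nonneg_left _ hC0
    rw [← Real.exp_add]
    apply Real.exp_le_exp.mpr
    nlinarith [sq_nonneg (|x| - 2), sq_abs x]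
  have hg : Tendsto (fun x : ℝ => (C * Real.exp 1) * Real.exp (-|x|)) atTop (nhds 0) := by
    have h1 : Tendsto (fun x : ℝ => -|x|) atTop atBot :=
      tendsto_neg_atTop_atBot.comp tendsto_abs_atTop_atTop
    have h2 := Real.tendsto_exp_atBot.comp h1
    simpa using h2.const_mul (C * Real.exp 1)
  exact squeeze_zero_norm hb hg

open Polynomial Filter in
lemma tendsto_poly_exp_atBot (P : Polynomial ℝ) :
    Tendsto (fun x => eval x P * Real.exp (-(x ^ 2 / 2))) atBot (nhds 0) := by
  obtain ⟨C, hC0, hC⟩ := poly_bound P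
  have hb : ∀ x : ℝ, |eval x P * Real.exp (-(x ^ 2 / 2))| ≤ (C * Real.exp 1) * Real.exp (-|x|) := by
    intro x
    refine (hC x).trans ?_
    rw [mul_assoc]
    apply mul_le_mul_of_nonneg_left _ hC0
    rw [← Real.exp_add]
    apply Real.exp_le_exp.mpr
    nlinarith [sq_nonneg (|x| - 2), sq_abs x]
  have hg : Tendsto (fun x : ℝ => (C * Real.exp 1) * Real.exp (-|x|)) atBot (nhds 0) := by
    have h1 : Tendsto (fun x : ℝ => -|x|) atBot atBot :=
      tendsto_neg_atTop_atBot.comp tendsto_abs_atBot_atTop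
    have h2 := Real.tendsto_exp_atBot.comp h1
    simpa using h2.const_mul (C * Real.exp 1)
  exact squeeze_zero_norm hb hg

open Polynomial in
lemma integrable_phi_poly (Q : Polynomial ℝ) :
    Integrable (fun x => φr x * eval x Q) (volume : Measure ℝ) := by
  have h := (integrable_poly_exp Q).const_mul (Real.sqrt (2 * Real.pi))⁻¹
  have e : (fun x => φr x * eval x Q)
      = fun x => (Real.sqrt (2 * Real.pi))⁻¹ * (eval x Q * Real.exp (-(x ^ 2 / 2))) := by
    funext x; unfold φr; ring
  rw [e]; exact h

open Polynomial in
lemma integrable_poly_gauss (Q : Polynomial ℝ) :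
    Integrable (fun x => eval x Q) (gaussianReal 0 1) := by
  rw [integrable_gauss_iff]
  have e : (fun x => eval x Q * φr x) = fun x => φr x * eval x Q := by funext x; ring
  rw [e]; exact integrable_phi_poly Q

open Polynomial Filter in
lemma stein (P : Polynomial ℝ) :
    ∫ x, x * eval x P ∂(gaussianReal 0 1) = ∫ x, eval x (derivative P) ∂(gaussianReal 0 1) := by
  rw [integral_gauss, integral_gauss]
  have i1 : Integrable (fun x => φr x * (x * eval x P)) (volume : Measure ℝ) := by
    have h := integrable_phi_poly (X * P)
    have e : (fun x => φr x * eval x (X * P)) = fun x => φr x * (x * eval x P) := by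
      funext x; simp [eval_mul]
    rwa [e] at h
  have i2 := integrable_phi_poly (derivative P)
  have hderiv : ∀ x : ℝ, HasDerivAt (fun y => -(eval y P * φr y))
      (φr x * (x * eval x P) - φr x * eval x (derivative P)) x := by
    intro x
    have h1 : HasDerivAt (fun y : ℝ => -(y ^ 2 / 2)) (-x) x := by
      have h := ((hasDerivAt_pow 2 x).div_const 2).neg
      refine h.congr_deriv ?_
      simp
    have h2 : HasDerivAt φr (-x * φr x) x := by
      have h := (h1.exp).const_mul (Real.sqrt (2 * Real.pi))⁻¹
      have e : -x * φr x = (Real.sqrt (2 * Real.pi))⁻¹ * (Real.exp (-(x ^ 2 / 2)) * -x) := by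
        unfold φr; ring
      rw [e]
      exact h
    have h3 := ((P.hasDerivAt x).mul h2).neg
    refine h3.congr_deriv ?_
    ring
  have hint : Integrable (fun x => φr x * (x * eval x P) - φr x * eval x (derivative P))
      (volume : Measure ℝ) := i1.sub i2
  have htop : Tendsto (fun y => -(eval y P * φr y)) atTop (nhds 0) := by
    have h := (tendsto_poly_exp_atTop P).const_mul (Real.sqrt (2 * Real.pi))⁻¹
    have e : (fun y => -(eval y P * φr y))
        = fun y => -((Real.sqrt (2 * Real.pi))⁻¹ * (eval y P * Real.exp (-(y ^ 2 / 2)))) := by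
      funext y; unfold φr; ring
    rw [e]
    simpa using h.neg
  have hbot : Tendsto (fun y => -(eval y P * φr y)) atBot (nhds 0) := by
    have h := (tendsto_poly_exp_atBot P).const_mul (Real.sqrt (2 * Real.pi))⁻¹
    have e : (fun y => -(eval y P * φr y))
        = fun y => -((Real.sqrt (2 * Real.pi))⁻¹ * (eval y P * Real.exp (-(y ^ 2 / 2)))) := by
      funext y; unfold φr; ring
    rw [e]
    simpa using h.neg
  have h1 := integral_Iic_of_hasDerivAt_of_tendsto' (a := 0) (fun x _ => hderiv x)
    hint.integrableOn hbot
  have h2 := integral_Ioi_of_hasDerivAt_of_tendsto' (a := 0) (fun x _ => hderiv x)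
    hint.integrableOn htop
  have h3 := intervalIntegral.integral_Iic_add_Ioi (b := (0:ℝ)) (μ := volume) hint.integrableOn hint.integrableOn
  rw [h1, h2] at h3
  have key : ∫ x, (φr x * (x * eval x P) - φr x * eval x (derivative P)) = 0 := by
    rw [← h3]; ring
  have h4 := integral_sub i1 i2
  rw [key] at h4
  linarith [h4]

open Polynomial in
lemma integrable_poly2 (a b : ℝ) (P R Q : Polynomial ℝ) :
    Integrable (fun p : ℝ × ℝ => eval p.1 P * eval p.2 R * eval (a * p.1 + b * p.2) Q)
      ((gaussianReal 0 1).prod (gaussianReal 0 1)) := by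
  have key : (fun p : ℝ × ℝ => eval p.1 P * eval p.2 R * eval (a * p.1 + b * p.2) Q)
      = fun p => ∑ j ∈ Finset.range (Q.natDegree + 1), ∑ i ∈ Finset.range (j + 1),
          eval p.1 (C (Q.coeff j * a ^ i * b ^ (j - i) * (j.choose i)) * P * X ^ i)
          * eval p.2 (R * X ^ (j - i)) := by
    funext p
    have h1 : eval (a * p.1 + b * p.2) Q
        = ∑ j ∈ Finset.range (Q.natDegree + 1), Q.coeff j * (a * p.1 + b * p.2) ^ j :=
      eval_eq_sum_range _
    rw [h1, Finset.mul_sum]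
    refine Finset.sum_congr rfl fun j _ => ?_
    rw [add_pow]
    simp only [Finset.mul_sum]
    refine Finset.sum_congr rfl fun i _ => ?_
    simp only [eval_mul, eval_pow, eval_C, eval_X, mul_pow]
    ring
  rw [key]
  apply integrable_finset_sum
  intro j _
  apply integrable_finset_sum
  intro i _
  exact (integrable_poly_gauss _).mul_prod (integrable_poly_gauss _)

open Polynomial in
lemma FS1 (a b : ℝ) (P Q : Polynomial ℝ) :
    ∫ p : ℝ × ℝ, p.1 * (eval p.1 P * eval (a * p.1 + b * p.2) Q)
        ∂((gaussianReal 0 1).prod (gaussianReal 0 1))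
    = ∫ p : ℝ × ℝ, (eval p.1 (derivative P) * eval (a * p.1 + b * p.2) Q
        + a * (eval p.1 P * eval (a * p.1 + b * p.2) (derivative Q)))
        ∂((gaussianReal 0 1).prod (gaussianReal 0 1)) := by
  have hi1 : Integrable (fun p : ℝ × ℝ => p.1 * (eval p.1 P * eval (a * p.1 + b * p.2) Q))
      ((gaussianReal 0 1).prod (gaussianReal 0 1)) := by
    have h := integrable_poly2 a b (X * P) 1 Q
    have e : (fun p : ℝ × ℝ => eval p.1 (X * P) * eval p.2 1 * eval (a * p.1 + b * p.2) Q)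
        = fun p : ℝ × ℝ => p.1 * (eval p.1 P * eval (a * p.1 + b * p.2) Q) := by
      funext p; simp [eval_mul]; ring
    rwa [e] at h
  have hi2 : Integrable (fun p : ℝ × ℝ => eval p.1 (derivative P) * eval (a * p.1 + b * p.2) Q
      + a * (eval p.1 P * eval (a * p.1 + b * p.2) (derivative Q)))
      ((gaussianReal 0 1).prod (gaussianReal 0 1)) := by
    have h1 := integrable_poly2 a b (derivative P) 1 Q
    have h2 := (integrable_poly2 a b P 1 (derivative Q)).const_mul a
    exact (h1.add h2).congr (Filter.Eventually.of_forall fun p => by simp)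
  have inner : ∀ z₂ : ℝ, (∫ z₁, z₁ * (eval z₁ P * eval (a * z₁ + b * z₂) Q) ∂(gaussianReal 0 1))
      = ∫ z₁, (eval z₁ (derivative P) * eval (a * z₁ + b * z₂) Q
          + a * (eval z₁ P * eval (a * z₁ + b * z₂) (derivative Q))) ∂(gaussianReal 0 1) := by
    intro z₂
    have e1 : (fun z₁ : ℝ => z₁ * (eval z₁ P * eval (a * z₁ + b * z₂) Q))
        = fun z₁ => z₁ * eval z₁ (P * Q.comp (C a * X + C (b * z₂))) := by
      funext z₁; simp [eval_comp]
    have e2 : (fun z₁ : ℝ => eval z₁ (derivative (P * Q.comp (C a * X + C (b * z₂)))))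
        = fun z₁ => eval z₁ (derivative P) * eval (a * z₁ + b * z₂) Q
          + a * (eval z₁ P * eval (a * z₁ + b * z₂) (derivative Q)) := by
      funext z₁
      simp [derivative_mul, derivative_comp, eval_comp]
      ring
    calc ∫ z₁, z₁ * (eval z₁ P * eval (a * z₁ + b * z₂) Q) ∂(gaussianReal 0 1)
        = ∫ z₁, z₁ * eval z₁ (P * Q.comp (C a * X + C (b * z₂))) ∂(gaussianReal 0 1) := by rw [e1]
      _ = ∫ z₁, eval z₁ (derivative (P * Q.comp (C a * X + C (b * z₂)))) ∂(gaussianReal 0 1) :=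
          stein _
      _ = _ := by rw [e2]
  rw [integral_prod_symm _ hi1, integral_prod_symm _ hi2]
  congr 1
  funext z₂
  simpa using inner z₂

open Polynomial in
lemma FS2 (a b : ℝ) (P Q : Polynomial ℝ) :
    ∫ p : ℝ × ℝ, p.2 * (eval p.1 P * eval (a * p.1 + b * p.2) Q)
        ∂((gaussianReal 0 1).prod (gaussianReal 0 1))
    = ∫ p : ℝ × ℝ, b * (eval p.1 P * eval (a * p.1 + b * p.2) (derivative Q))
        ∂((gaussianReal 0 1).prod (gaussianReal 0 1)) := by
  have hi1 : Integrable (fun p : ℝ × ℝ => p.2 * (eval p.1 P * eval (a * p.1 + b * p.2) Q))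
      ((gaussianReal 0 1).prod (gaussianReal 0 1)) := by
    have h := integrable_poly2 a b P X Q
    have e : (fun p : ℝ × ℝ => eval p.1 P * eval p.2 X * eval (a * p.1 + b * p.2) Q)
        = fun p : ℝ × ℝ => p.2 * (eval p.1 P * eval (a * p.1 + b * p.2) Q) := by
      funext p; simp; ring
    rwa [e] at h
  have hi2 : Integrable (fun p : ℝ × ℝ => b * (eval p.1 P * eval (a * p.1 + b * p.2) (derivative Q)))
      ((gaussianReal 0 1).prod (gaussianReal 0 1)) := by
    have h := (integrable_poly2 a b P 1 (derivative Q)).const_mul b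
    have e : (fun p : ℝ × ℝ => b * (eval p.1 P * eval p.2 1 * eval (a * p.1 + b * p.2) (derivative Q)))
        = fun p : ℝ × ℝ => b * (eval p.1 P * eval (a * p.1 + b * p.2) (derivative Q)) := by
      funext p; simp
    rwa [e] at h
  have inner : ∀ z₁ : ℝ, (∫ z₂, z₂ * (eval z₁ P * eval (a * z₁ + b * z₂) Q) ∂(gaussianReal 0 1))
      = ∫ z₂, b * (eval z₁ P * eval (a * z₁ + b * z₂) (derivative Q)) ∂(gaussianReal 0 1) := by
    intro z₁
    have e1 : (fun z₂ : ℝ => z₂ * (eval z₁ P * eval (a * z₁ + b * z₂) Q))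
        = fun z₂ => z₂ * eval z₂ (C (eval z₁ P) * Q.comp (C (a * z₁) + C b * X)) := by
      funext z₂; simp [eval_comp]
    have e2 : (fun z₂ : ℝ => eval z₂ (derivative (C (eval z₁ P) * Q.comp (C (a * z₁) + C b * X))))
        = fun z₂ => b * (eval z₁ P * eval (a * z₁ + b * z₂) (derivative Q)) := by
      funext z₂
      simp [derivative_mul, derivative_comp, eval_comp]
      ring
    calc ∫ z₂, z₂ * (eval z₁ P * eval (a * z₁ + b * z₂) Q) ∂(gaussianReal 0 1)
        = ∫ z₂, z₂ * eval z₂ (C (eval z₁ P) * Q.comp (C (a * z₁) + C b * X)) ∂(gaussianReal 0 1) := by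
          rw [e1]
      _ = ∫ z₂, eval z₂ (derivative (C (eval z₁ P) * Q.comp (C (a * z₁) + C b * X)))
            ∂(gaussianReal 0 1) := stein _
      _ = _ := by rw [e2]
  rw [integral_prod _ hi1, integral_prod _ hi2]
  congr 1
  funext z₁
  simpa using inner z₁

open Polynomial in
lemma IA (a b : ℝ) (P Q : Polynomial ℝ) :
    Integrable (fun p : ℝ × ℝ => eval p.1 P * eval (a * p.1 + b * p.2) Q)
      ((gaussianReal 0 1).prod (gaussianReal 0 1)) :=
  (integrable_poly2 a b P 1 Q).congr (Filter.Eventually.of_forall fun p => by simp)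

open Polynomial in
lemma IB (a b : ℝ) (P Q : Polynomial ℝ) :
    Integrable (fun p : ℝ × ℝ => p.1 * (eval p.1 P * eval (a * p.1 + b * p.2) Q))
      ((gaussianReal 0 1).prod (gaussianReal 0 1)) :=
  (integrable_poly2 a b (X * P) 1 Q).congr (Filter.Eventually.of_forall fun p => by
    simp only [eval_mul, eval_one, eval_X, mul_one]; ring)

open Polynomial in
lemma IC (a b : ℝ) (P Q : Polynomial ℝ) :
    Integrable (fun p : ℝ × ℝ => p.2 * (eval p.1 P * eval (a * p.1 + b * p.2) Q))
      ((gaussianReal 0 1).prod (gaussianReal 0 1)) :=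
  (integrable_poly2 a b P X Q).congr (Filter.Eventually.of_forall fun p => by
    simp only [eval_X]; ring)

open Polynomial in
lemma T_step (a b : ℝ) (m n : ℕ) :
    ∫ p : ℝ × ℝ, eval p.1 (HR (m + 1)) * eval (a * p.1 + b * p.2) (HR n)
        ∂((gaussianReal 0 1).prod (gaussianReal 0 1))
    = a * n * ∫ p : ℝ × ℝ, eval p.1 (HR m) * eval (a * p.1 + b * p.2) (HR (n - 1))
        ∂((gaussianReal 0 1).prod (gaussianReal 0 1)) := by
  have e0 : (fun p : ℝ × ℝ => eval p.1 (HR (m + 1)) * eval (a * p.1 + b * p.2) (HR n))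
      = fun p : ℝ × ℝ => p.1 * (eval p.1 (HR m) * eval (a * p.1 + b * p.2) (HR n))
          - (m : ℝ) * (eval p.1 (HR (m - 1)) * eval (a * p.1 + b * p.2) (HR n)) := by
    funext p
    rw [HR_succ]
    simp only [eval_sub, eval_mul, eval_X, eval_smul, smul_eq_mul, nsmul_eq_mul, eval_natCast]
    ring
  rw [e0, integral_sub (IB a b _ _) ((IA a b _ _).const_mul _), FS1]
  have e1 : (fun p : ℝ × ℝ => eval p.1 (derivative (HR m)) * eval (a * p.1 + b * p.2) (HR n)
      + a * (eval p.1 (HR m) * eval (a * p.1 + b * p.2) (derivative (HR n))))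
      = fun p : ℝ × ℝ => (m : ℝ) * (eval p.1 (HR (m - 1)) * eval (a * p.1 + b * p.2) (HR n))
        + a * n * (eval p.1 (HR m) * eval (a * p.1 + b * p.2) (HR (n - 1))) := by
    funext p
    rw [derivative_HR, derivative_HR]
    simp only [eval_smul, smul_eq_mul, nsmul_eq_mul, eval_mul, eval_natCast]
    ring
  rw [e1, integral_add ((IA a b _ _).const_mul _) ((IA a b _ _).const_mul _)]
  simp only [integral_const_mul]
  ring

open Polynomial in
lemma T_base (a b : ℝ) (hab : a ^ 2 + b ^ 2 = 1) (n : ℕ) :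
    ∫ p : ℝ × ℝ, eval p.1 (HR 0) * eval (a * p.1 + b * p.2) (HR (n + 1))
        ∂((gaussianReal 0 1).prod (gaussianReal 0 1)) = 0 := by
  have e0 : (fun p : ℝ × ℝ => eval p.1 (HR 0) * eval (a * p.1 + b * p.2) (HR (n + 1)))
      = fun p : ℝ × ℝ =>
          (a * (p.1 * (eval p.1 (HR 0) * eval (a * p.1 + b * p.2) (HR n)))
          + b * (p.2 * (eval p.1 (HR 0) * eval (a * p.1 + b * p.2) (HR n))))
          - (n : ℝ) * (eval p.1 (HR 0) * eval (a * p.1 + b * p.2) (HR (n - 1))) := by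
    funext p
    rw [HR_succ]
    simp only [eval_sub, eval_mul, eval_X, eval_smul, smul_eq_mul, nsmul_eq_mul, eval_natCast]
    ring
  have iadd : Integrable (fun p : ℝ × ℝ =>
      a * (p.1 * (eval p.1 (HR 0) * eval (a * p.1 + b * p.2) (HR n)))
      + b * (p.2 * (eval p.1 (HR 0) * eval (a * p.1 + b * p.2) (HR n))))
      ((gaussianReal 0 1).prod (gaussianReal 0 1)) :=
    ((IB a b _ _).const_mul _).add ((IC a b _ _).const_mul _)
  rw [e0, integral_sub iadd ((IA a b _ _).const_mul _),
    integral_add ((IB a b _ _).const_mul _) ((IC a b _ _).const_mul _)]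
  simp only [integral_const_mul]
  rw [FS1, FS2]
  have e1 : (fun p : ℝ × ℝ => eval p.1 (derivative (HR 0)) * eval (a * p.1 + b * p.2) (HR n)
      + a * (eval p.1 (HR 0) * eval (a * p.1 + b * p.2) (derivative (HR n))))
      = fun p : ℝ × ℝ =>
        (a * n) * (eval p.1 (HR 0) * eval (a * p.1 + b * p.2) (HR (n - 1))) := by
    funext p
    rw [derivative_HR, derivative_HR]
    simp only [eval_smul, smul_eq_mul, nsmul_eq_mul, eval_mul, eval_natCast, Nat.cast_zero, zero_smul,
      eval_zero]
    ring
  have e2 : (fun p : ℝ × ℝ => b * (eval p.1 (HR 0) * eval (a * p.1 + b * p.2) (derivative (HR n))))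
      = fun p : ℝ × ℝ =>
        (b * n) * (eval p.1 (HR 0) * eval (a * p.1 + b * p.2) (HR (n - 1))) := by
    funext p
    rw [derivative_HR]
    simp only [eval_smul, smul_eq_mul, nsmul_eq_mul, eval_mul, eval_natCast]
    ring
  rw [e1, e2, integral_const_mul, integral_const_mul]
  linear_combination ((n : ℝ) * ∫ (p : ℝ × ℝ), Polynomial.eval p.1 (HR 0) *
    Polynomial.eval (a * p.1 + b * p.2) (HR (n - 1)) ∂((gaussianReal 0 1).prod (gaussianReal 0 1))) * hab

open Polynomial in
lemma T_val (a b : ℝ) (hab : a ^ 2 + b ^ 2 = 1) : ∀ m n : ℕ,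
    (∫ p : ℝ × ℝ, eval p.1 (HR m) * eval (a * p.1 + b * p.2) (HR n)
        ∂((gaussianReal 0 1).prod (gaussianReal 0 1)))
    = if m = n then (m ! : ℝ) * a ^ m else 0 := by
  intro m
  induction m with
  | zero =>
    intro n
    cases n with
    | zero => simp [HR_zero]
    | succ k => rw [T_base a b hab]; simp
  | succ m ih =>
    intro n
    rw [T_step]
    cases n with
    | zero => simp
    | succ k =>
      rw [show k + 1 - 1 = k from rfl, ih k]
      by_cases h : m = k
      · subst h
        simp only [if_pos rfl, Nat.factorial_succ]
        push_cast
        ring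
      · have h2 : m + 1 ≠ k + 1 := by omega
        simp [h, h2]

open Polynomial in
/-- Mehler orthogonality for correlated standard Gaussians with correlation `ρ`. -/
theorem mehler_orthogonality {Ω : Type*} [MeasurableSpace Ω] (μ : Measure Ω)
    [IsProbabilityMeasure μ] (Z₁ Z₂ : Ω → ℝ) (hZ₁m : Measurable Z₁) (hZ₂m : Measurable Z₂)
    (hZ₁ : μ.map Z₁ = gaussianReal 0 1) (hZ₂ : μ.map Z₂ = gaussianReal 0 1)
    (hindep : IndepFun Z₁ Z₂ μ) (ρ : ℝ) (hρ : ρ ∈ Set.Icc (-1 : ℝ) 1)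
    (X Y : Ω → ℝ) (hX : X = Z₁)
    (hY : Y = fun ω => ρ * Z₁ ω + Real.sqrt (1 - ρ ^ 2) * Z₂ ω) (m n : ℕ) :
    (m = n → ∫ ω, He m (X ω) * He n (Y ω) ∂μ = (n ! : ℝ) * ρ ^ n) ∧
    (m ≠ n → ∫ ω, He m (X ω) * He n (Y ω) ∂μ = 0) := by
  rw [hX, hY]
  beta_reduce
  set b := Real.sqrt (1 - ρ ^ 2) with hb
  have hb2 : b ^ 2 = 1 - ρ ^ 2 := Real.sq_sqrt (by nlinarith [hρ.1, hρ.2])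
  have hab : ρ ^ 2 + b ^ 2 = 1 := by rw [hb2]; ring
  have hmap := (ProbabilityTheory.indepFun_iff_map_prod_eq_prod_map_map
      hZ₁m.aemeasurable hZ₂m.aemeasurable).mp hindep
  rw [hZ₁, hZ₂] at hmap
  have hcont : Continuous (fun p : ℝ × ℝ => eval p.1 (HR m) * eval (ρ * p.1 + b * p.2) (HR n)) := by
    exact ((HR m).continuous.comp continuous_fst).mul
      ((HR n).continuous.comp (by fun_prop))
  have h2 : (∫ p : ℝ × ℝ, eval p.1 (HR m) * eval (ρ * p.1 + b * p.2) (HR n)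
        ∂(μ.map (fun ω => (Z₁ ω, Z₂ ω))))
      = ∫ ω, eval (Z₁ ω) (HR m) * eval (ρ * Z₁ ω + b * Z₂ ω) (HR n) ∂μ :=
    integral_map (hZ₁m.prodMk hZ₂m).aemeasurable hcont.aestronglyMeasurable
  rw [hmap] at h2
  have key : ∫ ω, He m (Z₁ ω) * He n (ρ * Z₁ ω + b * Z₂ ω) ∂μ
      = if m = n then (m ! : ℝ) * ρ ^ m else 0 := by
    calc ∫ ω, He m (Z₁ ω) * He n (ρ * Z₁ ω + b * Z₂ ω) ∂μ
        = ∫ ω, eval (Z₁ ω) (HR m) * eval (ρ * Z₁ ω + b * Z₂ ω) (HR n) ∂μ := by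
          congr 1
          funext ω
          simp only [He_eq]
      _ = ∫ p : ℝ × ℝ, eval p.1 (HR m) * eval (ρ * p.1 + b * p.2) (HR n)
            ∂((gaussianReal 0 1).prod (gaussianReal 0 1)) := h2.symm
      _ = _ := T_val ρ b hab m n
  constructor
  · intro h
    subst h
    rw [key, if_pos rfl]
  · intro h
    rw [key, if_neg h]
end

section
/- Explicit fourth-cumulant (excess kurtosis) control by the second Hermite coefficient: let Z be a standard Gaussian random variable and let X = c₀ + c₁ Z + c₂(Z² − 1) for real c₀, c₁, c₂. Then the fourth cumulant of X, namely E[(X − E[X])⁴] − 3·Var(X)², equals 48 c₂² (c₁² + c₂²). In particular it is strictly positive whenever c₂ ≠ 0. -/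
open MeasureTheory ProbabilityTheory Matrix Nat
open scoped NNReal

section GaussianMomentsAux

open Real
open scoped ENNReal

private lemma intg_aux (n : ℕ) :
    Integrable (fun x : ℝ => x ^ n * Real.exp (-(2⁻¹:ℝ) * x ^ 2)) := by
  have h := integrable_rpow_mul_exp_neg_mul_sq (b := (2⁻¹:ℝ)) (by norm_num) (s := (n:ℝ))
    (by exact lt_of_lt_of_le (by norm_num) (Nat.cast_nonneg n))
  simpa [Real.rpow_natCast] using h

private lemma J0_aux : ∫ x : ℝ, Real.exp (-(2⁻¹:ℝ) * x ^ 2) = Real.sqrt (2 * π) := by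
  rw [integral_gaussian]
  rw [show ((2:ℝ)⁻¹) = 1/2 by norm_num, div_div_eq_mul_div, div_one, mul_comm]

private lemma Jodd_aux (n : ℕ) :
    ∫ x : ℝ, x ^ (2 * n + 1) * Real.exp (-(2⁻¹:ℝ) * x ^ 2) = 0 := by
  have hodd : Odd (2 * n + 1) := ⟨n, by ring⟩
  have h : (∫ x : ℝ, x ^ (2*n+1) * Real.exp (-(2⁻¹:ℝ) * x ^ 2))
      = -∫ x : ℝ, x ^ (2*n+1) * Real.exp (-(2⁻¹:ℝ) * x ^ 2) := by
    calc ∫ x : ℝ, x ^ (2*n+1) * Real.exp (-(2⁻¹:ℝ) * x ^ 2)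
        = ∫ x : ℝ, (-x) ^ (2*n+1) * Real.exp (-(2⁻¹:ℝ) * (-x) ^ 2) :=
          (integral_neg_eq_self (fun x : ℝ => x ^ (2*n+1) * Real.exp (-(2⁻¹:ℝ) * x ^ 2))
            volume).symm
      _ = ∫ x : ℝ, -(x ^ (2*n+1) * Real.exp (-(2⁻¹:ℝ) * x ^ 2)) := by
          congr 1; funext x; rw [hodd.neg_pow, neg_sq]; ring
      _ = -∫ x : ℝ, x ^ (2*n+1) * Real.exp (-(2⁻¹:ℝ) * x ^ 2) := integral_neg _
  linarith

private lemma ibp_aux (n : ℕ) :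
    ∫ x : ℝ, x ^ (n + 2) * Real.exp (-(2⁻¹:ℝ) * x ^ 2)
      = (n + 1 : ℝ) * ∫ x : ℝ, x ^ n * Real.exp (-(2⁻¹:ℝ) * x ^ 2) := by
  have hu : ∀ x : ℝ, HasDerivAt (fun x : ℝ => x ^ (n+1)) ((n+1 : ℝ) * x ^ n) x := by
    intro x
    simpa using hasDerivAt_pow (n+1) x
  have hv : ∀ x : ℝ, HasDerivAt (fun x : ℝ => -Real.exp (-(2⁻¹:ℝ) * x ^ 2))
      (x * Real.exp (-(2⁻¹:ℝ) * x ^ 2)) x := by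
    intro x
    have h1 : HasDerivAt (fun x : ℝ => -(2⁻¹:ℝ) * x ^ 2) (-x) x := by
      have := (hasDerivAt_pow 2 x).const_mul (-(2⁻¹:ℝ))
      simpa using this.congr_deriv (by ring)
    have := (h1.exp).fun_neg
    simpa [mul_comm] using this
  have key := integral_mul_deriv_eq_deriv_mul_of_integrable
    (u := fun x : ℝ => x ^ (n+1)) (u' := fun x => (n+1 : ℝ) * x ^ n)
    (v := fun x : ℝ => -Real.exp (-(2⁻¹:ℝ) * x ^ 2))
    (v' := fun x => x * Real.exp (-(2⁻¹:ℝ) * x ^ 2)) (fun x _ => hu x) (fun x _ => hv x)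
    (by
      have := intg_aux (n+2)
      apply this.congr
      filter_upwards with x
      simp [Pi.mul_apply]; ring)
    (by
      have := (intg_aux n).const_mul (n+1 : ℝ)
      apply (this.neg).congr
      filter_upwards with x
      simp [Pi.mul_apply]; ring)
    (by
      have := (intg_aux (n+1)).neg
      apply this.congr
      filter_upwards with x
      simp [Pi.mul_apply])
  have lhs : (∫ x : ℝ, x ^ (n+1) * (x * Real.exp (-(2⁻¹:ℝ) * x ^ 2)))
      = ∫ x : ℝ, x ^ (n+2) * Real.exp (-(2⁻¹:ℝ) * x ^ 2) := by
    congr 1; funext x; ring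
  rw [lhs] at key
  rw [key, ← integral_neg,
    show (fun x : ℝ => -((n+1:ℝ) * x ^ n * (-Real.exp (-(2⁻¹:ℝ) * x ^ 2))))
      = fun x : ℝ => (n+1:ℝ) * (x ^ n * Real.exp (-(2⁻¹:ℝ) * x ^ 2)) from by funext x; ring,
    integral_const_mul]

private lemma pdf_eq_aux (x : ℝ) :
    gaussianPDFReal 0 1 x = (Real.sqrt (2 * π))⁻¹ * Real.exp (-(2⁻¹:ℝ) * x ^ 2) := by
  simp only [gaussianPDFReal, NNReal.coe_one, mul_one, sub_zero]
  congr 1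
  ring

private lemma transfer_aux (f : ℝ → ℝ) :
    ∫ z, f z ∂(gaussianReal 0 1)
      = (Real.sqrt (2 * π))⁻¹ * ∫ x, f x * Real.exp (-(2⁻¹:ℝ) * x ^ 2) := by
  rw [gaussianReal_of_var_ne_zero 0 one_ne_zero,
    show gaussianPDF 0 1 = fun x => ((Real.toNNReal (gaussianPDFReal 0 1 x) : ℝ≥0) : ℝ≥0∞)
      from rfl,
    integral_withDensity_eq_integral_smul ((measurable_gaussianPDFReal 0 1).real_toNNReal) f,
    ← integral_const_mul]
  congr 1; funext x
  rw [NNReal.smul_def, Real.coe_toNNReal _ (gaussianPDFReal_nonneg 0 1 x), smul_eq_mul,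
    pdf_eq_aux]
  ring

private lemma intγ_aux (n : ℕ) : Integrable (fun z : ℝ => z ^ n) (gaussianReal 0 1) := by
  rw [gaussianReal_of_var_ne_zero 0 one_ne_zero,
    show gaussianPDF 0 1 = fun x => ((Real.toNNReal (gaussianPDFReal 0 1 x) : ℝ≥0) : ℝ≥0∞)
      from rfl,
    integrable_withDensity_iff_integrable_smul ((measurable_gaussianPDFReal 0 1).real_toNNReal)]
  have := ((intg_aux n).const_mul (Real.sqrt (2 * π))⁻¹)
  apply this.congr
  filter_upwards with x
  rw [NNReal.smul_def, Real.coe_toNNReal _ (gaussianPDFReal_nonneg 0 1 x), smul_eq_mul,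
    pdf_eq_aux]
  ring

private lemma sqrt_two_pi_pos : (0:ℝ) < Real.sqrt (2 * π) := by
  positivity

private lemma momγ_aux (n : ℕ) :
    ∫ z, z ^ n ∂(gaussianReal 0 1)
      = (Real.sqrt (2 * π))⁻¹ * ∫ x : ℝ, x ^ n * Real.exp (-(2⁻¹:ℝ) * x ^ 2) :=
  transfer_aux _

private lemma mval_aux :
    (∫ z, z ^ 0 ∂(gaussianReal 0 1)) = 1 ∧
    (∫ z, z ^ 1 ∂(gaussianReal 0 1)) = 0 ∧
    (∫ z, z ^ 2 ∂(gaussianReal 0 1)) = 1 ∧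
    (∫ z, z ^ 3 ∂(gaussianReal 0 1)) = 0 ∧
    (∫ z, z ^ 4 ∂(gaussianReal 0 1)) = 3 ∧
    (∫ z, z ^ 5 ∂(gaussianReal 0 1)) = 0 ∧
    (∫ z, z ^ 6 ∂(gaussianReal 0 1)) = 15 ∧
    (∫ z, z ^ 7 ∂(gaussianReal 0 1)) = 0 ∧
    (∫ z, z ^ 8 ∂(gaussianReal 0 1)) = 105 := by
  have hs := sqrt_two_pi_pos
  have hinv : (Real.sqrt (2 * π))⁻¹ * Real.sqrt (2 * π) = 1 := inv_mul_cancel₀ hs.ne'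
  have J0' : ∫ x : ℝ, x ^ 0 * Real.exp (-(2⁻¹:ℝ) * x ^ 2) = Real.sqrt (2 * π) := by
    rw [show (fun x : ℝ => x ^ 0 * Real.exp (-(2⁻¹:ℝ) * x ^ 2))
      = fun x : ℝ => Real.exp (-(2⁻¹:ℝ) * x ^ 2) from by funext x; rw [pow_zero, one_mul]]
    exact J0_aux
  have J1 : ∫ x : ℝ, x ^ 1 * Real.exp (-(2⁻¹:ℝ) * x ^ 2) = 0 := Jodd_aux 0
  have J3 : ∫ x : ℝ, x ^ 3 * Real.exp (-(2⁻¹:ℝ) * x ^ 2) = 0 := Jodd_aux 1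
  have J5 : ∫ x : ℝ, x ^ 5 * Real.exp (-(2⁻¹:ℝ) * x ^ 2) = 0 := Jodd_aux 2
  have J7 : ∫ x : ℝ, x ^ 7 * Real.exp (-(2⁻¹:ℝ) * x ^ 2) = 0 := Jodd_aux 3
  have J2 : ∫ x : ℝ, x ^ 2 * Real.exp (-(2⁻¹:ℝ) * x ^ 2) = Real.sqrt (2 * π) := by
    have h := ibp_aux 0
    rw [show (0+2) = 2 from rfl, J0'] at h
    rw [h]; norm_num
  have J4 : ∫ x : ℝ, x ^ 4 * Real.exp (-(2⁻¹:ℝ) * x ^ 2) = 3 * Real.sqrt (2 * π) := by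
    have h := ibp_aux 2
    rw [show (2+2) = 4 from rfl, J2] at h
    rw [h]; norm_num
  have J6 : ∫ x : ℝ, x ^ 6 * Real.exp (-(2⁻¹:ℝ) * x ^ 2) = 15 * Real.sqrt (2 * π) := by
    have h := ibp_aux 4
    rw [show (4+2) = 6 from rfl, J4] at h
    rw [h]; push_cast; ring
  have J8 : ∫ x : ℝ, x ^ 8 * Real.exp (-(2⁻¹:ℝ) * x ^ 2) = 105 * Real.sqrt (2 * π) := by
    have h := ibp_aux 6
    rw [show (6+2) = 8 from rfl, J6] at h
    rw [h]; push_cast; ring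
  refine ⟨?_, ?_, ?_, ?_, ?_, ?_, ?_, ?_, ?_⟩
  · rw [momγ_aux, J0']; exact hinv
  · rw [momγ_aux, J1]; simp
  · rw [momγ_aux, J2]; exact hinv
  · rw [momγ_aux, J3]; simp
  · rw [momγ_aux, J4]; linear_combination (3:ℝ) * hinv
  · rw [momγ_aux, J5]; simp
  · rw [momγ_aux, J6]; linear_combination (15:ℝ) * hinv
  · rw [momγ_aux, J7]; simp
  · rw [momγ_aux, J8]; linear_combination (105:ℝ) * hinv

private lemma comb_aux (a : ℕ → ℝ) :
    ∫ z, (∑ i ∈ Finset.range 9, a i * z ^ i) ∂(gaussianReal 0 1)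
      = a 0 + a 2 + 3 * a 4 + 15 * a 6 + 105 * a 8 := by
  obtain ⟨m0, m1, m2, m3, m4, m5, m6, m7, m8⟩ := mval_aux
  rw [integral_finset_sum _ (fun i _ => ((intγ_aux i).const_mul (a i)))]
  simp only [Finset.sum_range_succ, Finset.sum_range_zero, zero_add, integral_const_mul,
    m0, m1, m2, m3, m4, m5, m6, m7, m8]
  ring

end GaussianMomentsAux

/-- Fourth cumulant (excess kurtosis) of `X = c₀ + c₁ Z + c₂ (Z² - 1)` for standard
Gaussian `Z`: `E[(X - E X)⁴] - 3 Var(X)² = 48 c₂² (c₁² + c₂²)`, strictly positive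
whenever `c₂ ≠ 0`. -/
theorem fourth_cumulant_quadratic_feature (c₀ c₁ c₂ : ℝ) :
    (∫ z, ((c₀ + c₁ * z + c₂ * (z ^ 2 - 1)) -
          ∫ w, (c₀ + c₁ * w + c₂ * (w ^ 2 - 1)) ∂(gaussianReal 0 1)) ^ 4 ∂(gaussianReal 0 1)
        - 3 * (∫ z, ((c₀ + c₁ * z + c₂ * (z ^ 2 - 1)) -
          ∫ w, (c₀ + c₁ * w + c₂ * (w ^ 2 - 1)) ∂(gaussianReal 0 1)) ^ 2 ∂(gaussianReal 0 1)) ^ 2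
      = 48 * c₂ ^ 2 * (c₁ ^ 2 + c₂ ^ 2)) ∧
    (c₂ ≠ 0 →
      0 < ∫ z, ((c₀ + c₁ * z + c₂ * (z ^ 2 - 1)) -
          ∫ w, (c₀ + c₁ * w + c₂ * (w ^ 2 - 1)) ∂(gaussianReal 0 1)) ^ 4 ∂(gaussianReal 0 1)
        - 3 * (∫ z, ((c₀ + c₁ * z + c₂ * (z ^ 2 - 1)) -
          ∫ w, (c₀ + c₁ * w + c₂ * (w ^ 2 - 1)) ∂(gaussianReal 0 1)) ^ 2 ∂(gaussianReal 0 1)) ^ 2) := by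
  have hmean : (∫ w, (c₀ + c₁ * w + c₂ * (w ^ 2 - 1)) ∂(gaussianReal 0 1)) = c₀ := by
    have h := comb_aux (fun i => [c₀ - c₂, c₁, c₂, 0, 0, 0, 0, 0, 0].getD i 0)
    rw [show (fun z : ℝ => ∑ i ∈ Finset.range 9,
          (fun i => [c₀ - c₂, c₁, c₂, 0, 0, 0, 0, 0, 0].getD i 0) i * z ^ i)
        = (fun z : ℝ => c₀ + c₁ * z + c₂ * (z ^ 2 - 1)) from by
      funext z; simp [Finset.sum_range_succ]; ring] at h
    rw [h]; norm_num
  have h2 : (∫ z, ((c₀ + c₁ * z + c₂ * (z ^ 2 - 1)) - c₀) ^ 2 ∂(gaussianReal 0 1))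
      = c₁ ^ 2 + 2 * c₂ ^ 2 := by
    have h := comb_aux (fun i => [c₂ ^ 2, -2 * c₁ * c₂, c₁ ^ 2 - 2 * c₂ ^ 2, 2 * c₁ * c₂,
      c₂ ^ 2, 0, 0, 0, 0].getD i 0)
    rw [show (fun z : ℝ => ∑ i ∈ Finset.range 9,
          (fun i => [c₂ ^ 2, -2 * c₁ * c₂, c₁ ^ 2 - 2 * c₂ ^ 2, 2 * c₁ * c₂,
            c₂ ^ 2, 0, 0, 0, 0].getD i 0) i * z ^ i)
        = (fun z : ℝ => ((c₀ + c₁ * z + c₂ * (z ^ 2 - 1)) - c₀) ^ 2) from by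
      funext z; simp [Finset.sum_range_succ]; ring] at h
    rw [h]; norm_num; ring
  have h4 : (∫ z, ((c₀ + c₁ * z + c₂ * (z ^ 2 - 1)) - c₀) ^ 4 ∂(gaussianReal 0 1))
      = 3 * c₁ ^ 4 + 60 * c₁ ^ 2 * c₂ ^ 2 + 60 * c₂ ^ 4 := by
    have h := comb_aux (fun i => [c₂ ^ 4, -4 * c₁ * c₂ ^ 3, 6 * c₁ ^ 2 * c₂ ^ 2 - 4 * c₂ ^ 4,
      12 * c₁ * c₂ ^ 3 - 4 * c₁ ^ 3 * c₂, c₁ ^ 4 - 12 * c₁ ^ 2 * c₂ ^ 2 + 6 * c₂ ^ 4,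
      4 * c₁ ^ 3 * c₂ - 12 * c₁ * c₂ ^ 3, 6 * c₁ ^ 2 * c₂ ^ 2 - 4 * c₂ ^ 4,
      4 * c₁ * c₂ ^ 3, c₂ ^ 4].getD i 0)
    rw [show (fun z : ℝ => ∑ i ∈ Finset.range 9,
          (fun i => [c₂ ^ 4, -4 * c₁ * c₂ ^ 3, 6 * c₁ ^ 2 * c₂ ^ 2 - 4 * c₂ ^ 4,
            12 * c₁ * c₂ ^ 3 - 4 * c₁ ^ 3 * c₂, c₁ ^ 4 - 12 * c₁ ^ 2 * c₂ ^ 2 + 6 * c₂ ^ 4,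
            4 * c₁ ^ 3 * c₂ - 12 * c₁ * c₂ ^ 3, 6 * c₁ ^ 2 * c₂ ^ 2 - 4 * c₂ ^ 4,
            4 * c₁ * c₂ ^ 3, c₂ ^ 4].getD i 0) i * z ^ i)
        = (fun z : ℝ => ((c₀ + c₁ * z + c₂ * (z ^ 2 - 1)) - c₀) ^ 4) from by
      funext z; simp [Finset.sum_range_succ]; ring] at h
    rw [h]; norm_num; ring
  have key : (∫ z, ((c₀ + c₁ * z + c₂ * (z ^ 2 - 1)) -
          ∫ w, (c₀ + c₁ * w + c₂ * (w ^ 2 - 1)) ∂(gaussianReal 0 1)) ^ 4 ∂(gaussianReal 0 1)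
        - 3 * (∫ z, ((c₀ + c₁ * z + c₂ * (z ^ 2 - 1)) -
          ∫ w, (c₀ + c₁ * w + c₂ * (w ^ 2 - 1)) ∂(gaussianReal 0 1)) ^ 2 ∂(gaussianReal 0 1)) ^ 2
      = 48 * c₂ ^ 2 * (c₁ ^ 2 + c₂ ^ 2)) := by
    rw [hmean, h4, h2]; ring
  refine ⟨key, fun hc => ?_⟩
  rw [key]
  have hp : 0 < c₂ ^ 2 := by positivity
  nlinarith [sq_nonneg c₁, sq_nonneg c₂]
end
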